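/- Let F/E be an algebraic field extension of characteristic p > 0 fields such that the degrees [E(a):E] for a ∈ F are bounded by some N < ∞. If a ∈ F^(p^∞), then a is separably algebraic over E. -/

import Mathlib

/-- If `E` is a big subfield of `F` (char `p > 0`), then every element of
the largest perfect subfield `F^(p^∞) = ⋂ n, F^(p^n)` is separably algebraic over `E`. -/
theorem isSeparable_of_mem_perfect_subfield
    (p : ℕ) (hp : p.Prime) (E F : Type*) [Field E] [Field F] [CharP F p]
    [Algebra E F] (N : ℕ)
    (halg : Algebra.IsIntegral E F)
    (hdeg : ∀ x : F, (minpoly E x).natDegree ≤ N)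
    (a : F) (ha : a ∈ ⋂ n : ℕ, Set.range fun x : F => x ^ p ^ n) :
    IsSeparable E a := by
  classical
  haveI : ExpChar F p := ExpChar.prime hp
  haveI : Algebra.IsAlgebraic E F := halg.isAlgebraic
  set K := separableClosure E F with hK
  haveI : IsPurelyInseparable K F := separableClosure.isPurelyInseparable E F
  haveI : CharP K p := ((algebraMap K F).charP_iff (algebraMap K F).injective p).2 ‹_›
  haveI : ExpChar K p := ExpChar.prime hp
  obtain ⟨b, hb⟩ := Set.mem_iInter.1 ha N
  obtain ⟨m, y, hmin⟩ := IsPurelyInseparable.minpoly_eq_X_pow_sub_C K p b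
  have hb_int : IsIntegral E b := Algebra.IsIntegral.isIntegral b
  have hdvd : minpoly K b ∣ (minpoly E b).map (algebraMap E K) :=
    minpoly.dvd_map_of_isScalarTower E K b
  have hmapne : (minpoly E b).map (algebraMap E K) ≠ 0 :=
    (Polynomial.map_ne_zero_iff (algebraMap E K).injective).2 (minpoly.ne_zero hb_int)
  have h1 : p ^ m ≤ N := by
    have h2 := Polynomial.natDegree_le_of_dvd hdvd hmapne
    rw [hmin, Polynomial.natDegree_map] at h2
    have h3 : (Polynomial.X ^ p ^ m - Polynomial.C y).natDegree = p ^ m := by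
      rw [Polynomial.natDegree_X_pow_sub_C]
    rw [h3] at h2
    exact h2.trans (hdeg b)
  have hmN : m ≤ N := by
    by_contra h
    push_neg at h
    have : p ^ N < p ^ m := Nat.pow_lt_pow_right hp.one_lt h
    have hNp : N < p ^ N := Nat.lt_pow_self hp.one_lt
    omega
  have hbm : b ^ p ^ m = algebraMap K F y := by
    have h4 := minpoly.aeval K b
    rw [hmin] at h4
    simp only [map_sub, Polynomial.aeval_X_pow, Polynomial.aeval_C] at h4
    exact sub_eq_zero.1 h4
  have hb' : b ^ p ^ N = a := hb
  have haK : a ∈ K := by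
    have hpow : p ^ N = p ^ m * p ^ (N - m) := by
      rw [← pow_add]
      congr 1
      omega
    have : a = algebraMap K F (y ^ p ^ (N - m)) := by
      rw [map_pow, ← hbm, ← pow_mul, ← hpow, hb']
    rw [this]
    exact (y ^ p ^ (N - m)).2
  exact mem_separableClosure_iff.1 haK
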